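/- Let A ∈ ℂ^{m×m}, B ∈ ℂ^{n×n} be complex matrices viewed as quaternion matrices, and C = C₁ + C₂·j with C₁, C₂ ∈ ℂ^{m×n}. A quaternion matrix X = X₁ + X₂·j (X₁, X₂ complex) satisfies AX - X^i B = C (where X^i applies h ↦ -ihi entrywise, so X^i = X₁ - X₂j) if and only if AX₁ - X₁B = C₁ and AX₂ + X₂·conj(B) = C₂, where conj(B) is the entrywise complex conjugate. -/

import Mathlib

open Quaternion

noncomputable def qi : ℍ[ℝ] := ⟨0, 1, 0, 0⟩
noncomputable def qj : ℍ[ℝ] := ⟨0, 0, 1, 0⟩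

/-- The embedding of `ℂ` into `ℍ[ℝ]` as the span of `1` and `i`. -/
noncomputable def cq (z : ℂ) : ℍ[ℝ] := ⟨z.re, z.im, 0, 0⟩

/-- A complex matrix viewed as a quaternion matrix. -/
noncomputable def cmap {m n : ℕ} (M : Matrix (Fin m) (Fin n) ℂ) :
    Matrix (Fin m) (Fin n) ℍ[ℝ] := M.map cq

/-- Entrywise application of the involutive automorphism `h ↦ -ihi`. -/
noncomputable def phiM {m n : ℕ} (M : Matrix (Fin m) (Fin n) ℍ[ℝ]) :
    Matrix (Fin m) (Fin n) ℍ[ℝ] := M.map fun h => -(qi * h * qi)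

/-- Entrywise right multiplication by `j`. -/
noncomputable def jmul {m n : ℕ} (M : Matrix (Fin m) (Fin n) ℍ[ℝ]) :
    Matrix (Fin m) (Fin n) ℍ[ℝ] := M.map fun h => h * qj

lemma cq_mul (x y : ℂ) : cq (x * y) = cq x * cq y := by
  ext <;> simp only [Quaternion.re_mul, Quaternion.imI_mul, Quaternion.imJ_mul, Quaternion.imK_mul] <;> simp [cq, Complex.mul_re, Complex.mul_im] <;> ring

lemma cq_add (x y : ℂ) : cq (x + y) = cq x + cq y := by
  ext <;> simp only [Quaternion.re_add, Quaternion.imI_add, Quaternion.imJ_add, Quaternion.imK_add] <;> simp [cq]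

noncomputable def cqHom : ℂ →+* ℍ[ℝ] where
  toFun := cq
  map_one' := by ext <;> simp [cq]
  map_mul' := cq_mul
  map_zero' := by ext <;> simp [cq]
  map_add' := cq_add

lemma qj_cq (z : ℂ) : qj * cq z = cq (starRingEnd ℂ z) * qj := by
  ext <;> simp only [Quaternion.re_mul, Quaternion.imI_mul, Quaternion.imJ_mul, Quaternion.imK_mul] <;> simp [cq, qj] <;> ring

lemma phi_entry (x y : ℂ) : -(qi * (cq x + cq y * qj) * qi) = cq x - cq y * qj := by
  ext <;> simp only [Quaternion.re_mul, Quaternion.imI_mul, Quaternion.imJ_mul, Quaternion.imK_mul, Quaternion.re_add, Quaternion.imI_add, Quaternion.imJ_add, Quaternion.imK_add, Quaternion.re_sub, Quaternion.imI_sub, Quaternion.imJ_sub, Quaternion.imK_sub, Quaternion.re_neg, Quaternion.imI_neg, Quaternion.imJ_neg, Quaternion.imK_neg] <;> simp [cq, qi, qj] <;> ring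

lemma key_entry (u v u' v' : ℂ) :
    cq u + cq v * qj = cq u' + cq v' * qj ↔ u = u' ∧ v = v' := by
  constructor
  · intro h
    have h1 := congrArg QuaternionAlgebra.re h
    have h2 := congrArg QuaternionAlgebra.imI h
    have h3 := congrArg QuaternionAlgebra.imJ h
    have h4 := congrArg QuaternionAlgebra.imK h
    simp only [Quaternion.re_mul, Quaternion.imI_mul, Quaternion.imJ_mul, Quaternion.imK_mul, Quaternion.re_add, Quaternion.imI_add, Quaternion.imJ_add, Quaternion.imK_add] at h1 h2 h3 h4
    simp [cq, qj] at h1 h2 h3 h4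
    exact ⟨Complex.ext h1 h2, Complex.ext h3 h4⟩
  · rintro ⟨rfl, rfl⟩; rfl

noncomputable def Jmat (n : ℕ) : Matrix (Fin n) (Fin n) ℍ[ℝ] :=
  Matrix.diagonal (fun _ => qj)

lemma jmul_eq {m n : ℕ} (M : Matrix (Fin m) (Fin n) ℍ[ℝ]) :
    jmul M = M * Jmat n := by
  refine Matrix.ext fun i j => ?_
  simp [jmul, Jmat, Matrix.mul_diagonal]

lemma J_cmap {n : ℕ} (B : Matrix (Fin n) (Fin n) ℂ) :
    Jmat n * cmap B = cmap (B.map (starRingEnd ℂ)) * Jmat n := by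
  refine Matrix.ext fun i j => ?_
  simp [Jmat, Matrix.diagonal_mul, Matrix.mul_diagonal, cmap, qj_cq]

theorem sylvester_type_split {m n : ℕ}
    (A : Matrix (Fin m) (Fin m) ℂ) (B : Matrix (Fin n) (Fin n) ℂ)
    (C₁ C₂ X₁ X₂ : Matrix (Fin m) (Fin n) ℂ) :
    (cmap A * (cmap X₁ + jmul (cmap X₂)) -
        phiM (cmap X₁ + jmul (cmap X₂)) * cmap B =
      cmap C₁ + jmul (cmap C₂)) ↔
    (A * X₁ - X₁ * B = C₁ ∧ A * X₂ + X₂ * B.map (starRingEnd ℂ) = C₂) := by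
  have hcmul : ∀ {p q r : ℕ} (M : Matrix (Fin p) (Fin q) ℂ)
      (N : Matrix (Fin q) (Fin r) ℂ), cmap (M * N) = cmap M * cmap N := by
    intro p q r M N
    exact Matrix.map_mul (f := cqHom)
  have hcadd : ∀ {p q : ℕ} (M N : Matrix (Fin p) (Fin q) ℂ),
      cmap (M + N) = cmap M + cmap N := by
    intro p q M N; refine Matrix.ext fun i j => ?_; simp [cmap, cq_add]
  have hcsub : ∀ {p q : ℕ} (M N : Matrix (Fin p) (Fin q) ℂ),
      cmap (M - N) = cmap M - cmap N := by
    intro p q M N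
    have := hcadd (M - N) N
    simp only [sub_add_cancel] at this
    rw [this, add_sub_cancel_right]
  have hphi : phiM (cmap X₁ + jmul (cmap X₂)) = cmap X₁ - jmul (cmap X₂) := by
    refine Matrix.ext fun i j => ?_
    simp only [phiM, Matrix.map_apply, Matrix.add_apply, Matrix.sub_apply,
      cmap, jmul]
    exact phi_entry (X₁ i j) (X₂ i j)
  rw [hphi]; simp only [jmul_eq]
  have hLHS : cmap A * (cmap X₁ + cmap X₂ * Jmat n) -
      (cmap X₁ - cmap X₂ * Jmat n) * cmap B =
      cmap (A * X₁ - X₁ * B) +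
        cmap (A * X₂ + X₂ * B.map (starRingEnd ℂ)) * Jmat n := by
    have hJB : cmap X₂ * Jmat n * cmap B =
        cmap X₂ * cmap (B.map (starRingEnd ℂ)) * Jmat n := by
      rw [Matrix.mul_assoc, J_cmap, ← Matrix.mul_assoc]
    rw [hcsub, hcadd, hcmul, hcmul, hcmul, hcmul, Matrix.mul_add, Matrix.sub_mul,
      Matrix.add_mul, ← Matrix.mul_assoc, hJB]
    abel
  rw [hLHS]
  constructor
  · intro h
    have key : ∀ i j, cq ((A * X₁ - X₁ * B) i j) + cq ((A * X₂ + X₂ * B.map (starRingEnd ℂ)) i j) * qj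
        = cq (C₁ i j) + cq (C₂ i j) * qj := by
      intro i j
      have hij := congrFun (congrFun h i) j
      simpa only [Matrix.add_apply, Jmat, Matrix.mul_diagonal, cmap,
        Matrix.map_apply] using hij
    constructor <;> refine Matrix.ext fun i j => ?_
    · exact ((key_entry _ _ _ _).1 (key i j)).1
    · exact ((key_entry _ _ _ _).1 (key i j)).2
  · rintro ⟨h1, h2⟩
    rw [h1, h2]
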